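/- Let f : [0,1] → [0,∞) be a probability density that is non-decreasing on [0,1], and let s : [0,1] → [0,1] be a measurable selection function with ∫₀¹ s(x) f(x) dx > 0. Then ∫₀¹ s(x) dx > 0, and for every t ∈ [0,1], (∫₀ᵗ s(x) f(x) dx) / (∫₀¹ s(x) f(x) dx) ≤ (∫₀ᵗ s(x) dx) / (∫₀¹ s(x) dx). -/

import Mathlib

open MeasureTheory Set

/-- Selective dominance inequality for a non-decreasing density. -/
theorem selective_dominance_of_monotone_density
    (f s : ℝ → ℝ)
    (hf_nonneg : ∀ x ∈ Set.Icc (0:ℝ) 1, 0 ≤ f x)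
    (hf_mono : MonotoneOn f (Set.Icc (0:ℝ) 1))
    (hf_int : IntervalIntegrable f volume 0 1)
    (hf_dens : ∫ x in (0:ℝ)..1, f x = 1)
    (hs_meas : Measurable s)
    (hs01 : ∀ x ∈ Set.Icc (0:ℝ) 1, s x ∈ Set.Icc (0:ℝ) 1)
    (hpos : 0 < ∫ x in (0:ℝ)..1, s x * f x) :
    0 < ∫ x in (0:ℝ)..1, s x ∧
    ∀ t ∈ Set.Icc (0:ℝ) 1,
      (∫ x in (0:ℝ)..t, s x * f x) / (∫ x in (0:ℝ)..1, s x * f x)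
        ≤ (∫ x in (0:ℝ)..t, s x) / (∫ x in (0:ℝ)..1, s x) := by
  -- integrability of s on [0,1]
  have hs_int : IntervalIntegrable s volume 0 1 := by
    rw [intervalIntegrable_iff'] at *
    refine Integrable.mono' ((integrableOn_const_iff (C := (1:ℝ))).mpr (Or.inr ?_)) hs_meas.aestronglyMeasurable ?_
    · rw [Set.uIcc_of_le (by norm_num : (0:ℝ) ≤ 1)]; exact measure_Icc_lt_top
    filter_upwards [ae_restrict_mem measurableSet_uIcc] with x hx
    have hx' : x ∈ Set.Icc (0:ℝ) 1 := by
      simpa [Set.uIcc_of_le (by norm_num : (0:ℝ) ≤ 1)] using hx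
    have := hs01 x hx'
    rw [Real.norm_eq_abs, abs_le]; constructor <;> linarith [this.1, this.2]
  have hsf_int : IntervalIntegrable (fun x => s x * f x) volume 0 1 := by
    rw [intervalIntegrable_iff'] at *
    refine Integrable.mono' hf_int.norm (hs_meas.aestronglyMeasurable.mul hf_int.aestronglyMeasurable) ?_
    filter_upwards [ae_restrict_mem measurableSet_uIcc] with x hx
    have hx' : x ∈ Set.Icc (0:ℝ) 1 := by
      simpa [Set.uIcc_of_le (by norm_num : (0:ℝ) ≤ 1)] using hx
    have h1 := hs01 x hx'
    have h2 := hf_nonneg x hx'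
    rw [Real.norm_eq_abs, abs_mul, abs_of_nonneg h1.1, abs_of_nonneg h2]
    rw [Real.norm_eq_abs]
    nlinarith [h1.1, h1.2, abs_nonneg (f x), le_abs_self (f x)]
  -- B := ∫ s > 0
  have hA := hpos
  have hB_nonneg : 0 ≤ ∫ x in (0:ℝ)..1, s x := by
    apply intervalIntegral.integral_nonneg (by norm_num)
    intro x hx; exact (hs01 x hx).1
  have hAle : (∫ x in (0:ℝ)..1, s x * f x) ≤ f 1 * ∫ x in (0:ℝ)..1, s x := by
    rw [← intervalIntegral.integral_const_mul]
    apply intervalIntegral.integral_mono_on (by norm_num) hsf_int (hs_int.const_mul _)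
    intro x hx
    have h1 := hs01 x hx
    have hf1 : f x ≤ f 1 := hf_mono hx (by norm_num) hx.2
    nlinarith [h1.1, hf_nonneg x hx]
  have hB : 0 < ∫ x in (0:ℝ)..1, s x := by
    rcases lt_or_eq_of_le hB_nonneg with h | h
    · exact h
    · exfalso; rw [← h] at hAle; simp at hAle; linarith
  refine ⟨hB, ?_⟩
  intro t ht
  have h01 : (0:ℝ) ≤ 1 := by norm_num
  have hsub1 : IntervalIntegrable s volume 0 t :=
    hs_int.mono_set (by rw [Set.uIcc_of_le ht.1, Set.uIcc_of_le h01]; exact Set.Icc_subset_Icc le_rfl ht.2)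
  have hsub2 : IntervalIntegrable s volume t 1 :=
    hs_int.mono_set (by rw [Set.uIcc_of_le ht.2, Set.uIcc_of_le h01]; exact Set.Icc_subset_Icc ht.1 le_rfl)
  have hfsub1 : IntervalIntegrable (fun x => s x * f x) volume 0 t :=
    hsf_int.mono_set (by rw [Set.uIcc_of_le ht.1, Set.uIcc_of_le h01]; exact Set.Icc_subset_Icc le_rfl ht.2)
  have hfsub2 : IntervalIntegrable (fun x => s x * f x) volume t 1 :=
    hsf_int.mono_set (by rw [Set.uIcc_of_le ht.2, Set.uIcc_of_le h01]; exact Set.Icc_subset_Icc ht.1 le_rfl)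
  have hsplitB : (∫ x in (0:ℝ)..t, s x) + (∫ x in t..1, s x) = ∫ x in (0:ℝ)..1, s x :=
    intervalIntegral.integral_add_adjacent_intervals hsub1 hsub2
  have hsplitA : (∫ x in (0:ℝ)..t, s x * f x) + (∫ x in t..1, s x * f x)
      = ∫ x in (0:ℝ)..1, s x * f x :=
    intervalIntegral.integral_add_adjacent_intervals hfsub1 hfsub2
  -- nonnegativity of the pieces
  have hb1 : 0 ≤ ∫ x in (0:ℝ)..t, s x :=
    intervalIntegral.integral_nonneg ht.1 (fun x hx => (hs01 x (Set.Icc_subset_Icc le_rfl ht.2 hx)).1)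
  have hb2 : 0 ≤ ∫ x in t..1, s x :=
    intervalIntegral.integral_nonneg ht.2 (fun x hx => (hs01 x (Set.Icc_subset_Icc ht.1 le_rfl hx)).1)
  have ha1 : 0 ≤ ∫ x in (0:ℝ)..t, s x * f x := by
    apply intervalIntegral.integral_nonneg ht.1
    intro x hx
    have hx' := Set.Icc_subset_Icc le_rfl ht.2 hx
    exact mul_nonneg (hs01 x hx').1 (hf_nonneg x hx')
  have ha2 : 0 ≤ ∫ x in t..1, s x * f x := by
    apply intervalIntegral.integral_nonneg ht.2
    intro x hx
    have hx' := Set.Icc_subset_Icc ht.1 le_rfl hx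
    exact mul_nonneg (hs01 x hx').1 (hf_nonneg x hx')
  have hft : 0 ≤ f t := hf_nonneg t ht
  -- key pointwise bounds
  have hk1 : (∫ x in (0:ℝ)..t, s x * f x) ≤ f t * ∫ x in (0:ℝ)..t, s x := by
    rw [← intervalIntegral.integral_const_mul]
    apply intervalIntegral.integral_mono_on ht.1 hfsub1 (hsub1.const_mul _)
    intro x hx
    have hx' := Set.Icc_subset_Icc le_rfl ht.2 hx
    have : f x ≤ f t := hf_mono hx' ht hx.2
    nlinarith [(hs01 x hx').1, hf_nonneg x hx']
  have hk2 : f t * (∫ x in t..1, s x) ≤ ∫ x in t..1, s x * f x := by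
    rw [← intervalIntegral.integral_const_mul]
    apply intervalIntegral.integral_mono_on ht.2 (hsub2.const_mul _) hfsub2
    intro x hx
    have hx' := Set.Icc_subset_Icc ht.1 le_rfl hx
    have : f t ≤ f x := hf_mono ht hx' hx.1
    nlinarith [(hs01 x hx').1]
  -- key cross inequality
  have hkey : (∫ x in (0:ℝ)..t, s x * f x) * (∫ x in t..1, s x)
      ≤ (∫ x in (0:ℝ)..t, s x) * (∫ x in t..1, s x * f x) := by
    calc (∫ x in (0:ℝ)..t, s x * f x) * (∫ x in t..1, s x)
        ≤ (f t * ∫ x in (0:ℝ)..t, s x) * (∫ x in t..1, s x) := by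
          exact mul_le_mul_of_nonneg_right hk1 hb2
      _ = (∫ x in (0:ℝ)..t, s x) * (f t * ∫ x in t..1, s x) := by ring
      _ ≤ (∫ x in (0:ℝ)..t, s x) * (∫ x in t..1, s x * f x) :=
          mul_le_mul_of_nonneg_left hk2 hb1
  rw [div_le_div_iff₀ hA hB]
  nlinarith [hkey, hsplitA, hsplitB, ha1, hb1]
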